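/- arXiv:1809.04613 — 8 statements merged into one kernel-verified Lean document; each statement's English description precedes it below -/
import Mathlib

section
/- For the stochastic mass action system with species $(A,B,C)$ and reactions $A+B\to 0$, $B\to A+C$, $C\to 2B$, $2B\to C$, every reachable step preserves the quantity $x_1 - x_2 - 2x_3$. If the initial state $x^0$ satisfies $x^0_1 - x^0_2 - 2x^0_3 < 0$, then from every state reachable from $x^0$ one can reach a state at which the reaction $A+B\to 0$ is active; consequently no extinction set for $A+B\to 0$ is reachable from $x^0$. -/
open Finset

/-- A state: copy-numbers of the `d` species. -/
abbrev State (d : ℕ) := Fin d → ℕ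

/-- A reaction: a pair (source complex, product complex). -/
abbrev Rxn (d : ℕ) := (State d) × (State d)

/-- A reaction with source `y` is active at `x` iff `x ≥ y` componentwise. -/
def active {d : ℕ} (y x : State d) : Prop := ∀ i, y i ≤ x i

/-- One-step reachability: from `x` jump to `x + y' - y` whenever `x ≥ y` for a reaction `y → y'`. -/
def step {d : ℕ} (R : List (Rxn d)) (x x' : State d) : Prop :=
  ∃ r ∈ R, active r.1 x ∧ ∀ i, x' i + r.1 i = x i + r.2 i

/-- Reachability: reflexive-transitive closure of one-step reachability. -/
def reach {d : ℕ} (R : List (Rxn d)) : State d → State d → Prop :=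
  Relation.ReflTransGen (step R)

/-- A set is closed if no state outside it is reachable from inside it. -/
def closedSet {d : ℕ} (R : List (Rxn d)) (Γ : Set (State d)) : Prop :=
  ∀ x ∈ Γ, ∀ x', reach R x x' → x' ∈ Γ

/-- An extinction set for a reaction: a closed set on which the reaction is never active. -/
def extinctionSet {d : ℕ} (R : List (Rxn d)) (r : Rxn d) (Γ : Set (State d)) : Prop :=
  closedSet R Γ ∧ ∀ x ∈ Γ, ¬ active r.1 x

/-- No extinction set for `r` is reachable from `x`. -/
def noExtSetReachable {d : ℕ} (R : List (Rxn d)) (r : Rxn d) (x : State d) : Prop :=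
  ∀ Γ : Set (State d), extinctionSet R r Γ → ∀ x' ∈ Γ, ¬ reach R x x'

/-- The network A+B → 0, B → A+C, C → 2B, 2B → C. -/
def N3 : List (Rxn 3) :=
  [(![1,1,0], ![0,0,0]), (![0,1,0], ![1,0,1]), (![0,0,1], ![0,2,0]), (![0,2,0], ![0,0,1])]

lemma inv_step_aux : ∀ x x' : State 3, step N3 x x' →
    (x' 0 : ℤ) - (x' 1 : ℤ) - 2 * (x' 2 : ℤ) = (x 0 : ℤ) - (x 1 : ℤ) - 2 * (x 2 : ℤ) := by
  rintro x x' ⟨r, hr, hact, heq⟩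
  have e0 := heq 0; have e1 := heq 1; have e2 := heq 2
  fin_cases hr <;> simp at e0 e1 e2 <;> omega

lemma inv_reach_aux {x x' : State 3} (h : reach N3 x x') :
    (x' 0 : ℤ) - (x' 1 : ℤ) - 2 * (x' 2 : ℤ) = (x 0 : ℤ) - (x 1 : ℤ) - 2 * (x 2 : ℤ) := by
  induction h with
  | refl => rfl
  | tail _ h2 ih => rw [inv_step_aux _ _ h2, ih]

lemma stepB (x : State 3) (h : 1 ≤ x 1) : step N3 x ![x 0 + 1, x 1 - 1, x 2 + 1] := by
  refine ⟨(![0,1,0], ![1,0,1]), by simp [N3], ?_, ?_⟩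
  · intro i; fin_cases i <;> simp <;> omega
  · intro i; fin_cases i <;> simp <;> omega

lemma stepC (x : State 3) (h : 1 ≤ x 2) : step N3 x ![x 0, x 1 + 2, x 2 - 1] := by
  refine ⟨(![0,0,1], ![0,2,0]), by simp [N3], ?_, ?_⟩
  · intro i; fin_cases i <;> simp <;> omega
  · intro i; fin_cases i <;> simp <;> omega

lemma fromB (x : State 3) (h : 1 ≤ x 1) :
    ∃ x'', reach N3 x x'' ∧ active ![1,1,0] x'' := by
  refine ⟨![x 0 + 1, x 1 - 1 + 2, x 2 + 1 - 1], ?_, ?_⟩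
  · refine Relation.ReflTransGen.head (stepB x h) (Relation.ReflTransGen.single ?_)
    have := stepC ![x 0 + 1, x 1 - 1, x 2 + 1] (by simp)
    simpa using this
  · intro i; fin_cases i <;> simp <;> omega

lemma active_of_inv (x : State 3) (h : (x 0 : ℤ) - (x 1 : ℤ) - 2 * (x 2 : ℤ) < 0) :
    ∃ x'', reach N3 x x'' ∧ active ![1,1,0] x'' := by
  by_cases h1 : 1 ≤ x 1
  · exact fromB x h1
  · have h2 : 1 ≤ x 2 := by omega
    obtain ⟨x'', hr, ha⟩ := fromB ![x 0, x 1 + 2, x 2 - 1] (by simp)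
    exact ⟨x'', Relation.ReflTransGen.head (stepC x h2) hr, ha⟩

/-- Every step preserves `x₁ - x₂ - 2x₃`; if initially this quantity is negative, from every
reachable state one can reach a state where A+B → 0 is active, hence no extinction set for
A+B → 0 is reachable. -/
theorem no_ext_AB_N3 (x0 : State 3) (h0 : (x0 0 : ℤ) - (x0 1 : ℤ) - 2 * (x0 2 : ℤ) < 0) :
    (∀ x x' : State 3, step N3 x x' →
      (x' 0 : ℤ) - (x' 1 : ℤ) - 2 * (x' 2 : ℤ) = (x 0 : ℤ) - (x 1 : ℤ) - 2 * (x 2 : ℤ)) ∧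
    (∀ x, reach N3 x0 x → ∃ x'', reach N3 x x'' ∧ active ![1,1,0] x'') ∧
    noExtSetReachable N3 (![1,1,0], ![0,0,0]) x0 := by
  refine ⟨inv_step_aux, ?_, ?_⟩
  · intro x hx
    exact active_of_inv x (by rw [inv_reach_aux hx]; exact h0)
  · rintro Γ ⟨hcl, hna⟩ x' hx' hr
    obtain ⟨x'', hr2, ha⟩ := active_of_inv x' (by rw [inv_reach_aux hr]; exact h0)
    exact hna x'' (hcl x' hx' x'' hr2) ha
end

section
/- For the stochastic mass action system with species $(A,B,C)$ and reactions $A+B\to 0$, $B\to A+C$, $C\to 2B$, $2B\to C$, if $X_1(0) - X_2(0) - 2X_3(0) < 0$ then no extinction set for any of the four reactions is reachable from $X(0)$; that is, no extinction event can occur. -/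
open Finset

lemma step_v {x x' : State 3} (h : step N3 x x') :
    (x' 0 : ℤ) - x' 1 - 2 * x' 2 = (x 0 : ℤ) - x 1 - 2 * x 2 := by
  obtain ⟨r, hr, hact, heq⟩ := h
  have h0 := heq 0; have h1 := heq 1; have h2 := heq 2
  fin_cases hr <;> simp_all <;> omega

lemma reach_v {x x' : State 3} (h : reach N3 x x') :
    (x' 0 : ℤ) - x' 1 - 2 * x' 2 = (x 0 : ℤ) - x 1 - 2 * x 2 := by
  induction h with
  | refl => rfl
  | tail _ hs ih => rw [step_v hs, ih]

/-- From any state with negative invariant, every source of N3 can be activated. -/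
lemma reach_active (r : Rxn 3) (hr : r ∈ N3) (x : State 3)
    (hv : (x 0 : ℤ) - x 1 - 2 * x 2 < 0) :
    ∃ x', reach N3 x x' ∧ active r.1 x' := by
  have hpos : 1 ≤ x 1 ∨ 1 ≤ x 2 := by omega
  fin_cases hr
  · -- A+B → 0, source ![1,1,0]
    rcases Nat.lt_or_ge (x 0) 1 with hA | hA
    · rcases hpos with hB | hC
      · -- A=0, B≥1 : do B→A+C, then maybe C→2B
        rcases Nat.lt_or_ge (x 1) 2 with hB1 | hB2
        · have h1 := stepB x hB
          have h2 := stepC ![x 0 + 1, x 1 - 1, x 2 + 1] (by simp)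
          simp at h2
          exact ⟨_, Relation.ReflTransGen.head h1 (Relation.ReflTransGen.single h2),
            by intro i; fin_cases i <;> simp <;> omega⟩
        · exact ⟨_, Relation.ReflTransGen.single (stepB x hB),
            by intro i; fin_cases i <;> simp <;> omega⟩
      · -- A=0, B=0?, C≥1 : C→2B then B→A+C
        have h1 := stepC x hC
        have h2 := stepB ![x 0, x 1 + 2, x 2 - 1] (by simp)
        simp at h2
        exact ⟨_, Relation.ReflTransGen.head h1 (Relation.ReflTransGen.single h2),
          by intro i; fin_cases i <;> simp <;> omega⟩
    · rcases Nat.lt_or_ge (x 1) 1 with hB | hB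
      · have hC : 1 ≤ x 2 := by omega
        exact ⟨_, Relation.ReflTransGen.single (stepC x hC),
          by intro i; fin_cases i <;> simp <;> omega⟩
      · exact ⟨x, Relation.ReflTransGen.refl,
          by intro i; fin_cases i <;> simp <;> omega⟩
  · -- B → A+C, source ![0,1,0]
    rcases hpos with hB | hC
    · exact ⟨x, Relation.ReflTransGen.refl,
        by intro i; fin_cases i <;> simp <;> omega⟩
    · exact ⟨_, Relation.ReflTransGen.single (stepC x hC),
        by intro i; fin_cases i <;> simp <;> omega⟩
  · -- C → 2B, source ![0,0,1]
    rcases Nat.lt_or_ge (x 2) 1 with hC | hC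
    · have hB : 1 ≤ x 1 := by omega
      exact ⟨_, Relation.ReflTransGen.single (stepB x hB),
        by intro i; fin_cases i <;> simp <;> omega⟩
    · exact ⟨x, Relation.ReflTransGen.refl,
        by intro i; fin_cases i <;> simp <;> omega⟩
  · -- 2B → C, source ![0,2,0]
    rcases Nat.lt_or_ge (x 1) 2 with hB | hB
    · rcases hpos with hB1 | hC
      · -- B=1, need C: B→A+C then C→2B
        have h1 := stepB x hB1
        have h2 := stepC ![x 0 + 1, x 1 - 1, x 2 + 1] (by simp)
        simp at h2
        exact ⟨_, Relation.ReflTransGen.head h1 (Relation.ReflTransGen.single h2),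
          by intro i; fin_cases i <;> simp <;> omega⟩
      · exact ⟨_, Relation.ReflTransGen.single (stepC x hC),
          by intro i; fin_cases i <;> simp <;> omega⟩
    · exact ⟨x, Relation.ReflTransGen.refl,
        by intro i; fin_cases i <;> simp <;> omega⟩

/-- If `x₁ - x₂ - 2x₃ < 0` initially, then no extinction set for any of the four reactions is
reachable: no extinction event can occur. -/
theorem no_extinction_N3 (x0 : State 3)
    (h0 : (x0 0 : ℤ) - (x0 1 : ℤ) - 2 * (x0 2 : ℤ) < 0) :
    ∀ r ∈ N3, noExtSetReachable N3 r x0 := by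
  intro r hr Γ ⟨hclosed, hnact⟩ x' hx' hreach
  have hv : (x' 0 : ℤ) - x' 1 - 2 * x' 2 < 0 := by
    have := reach_v hreach; omega
  obtain ⟨x'', hr2, hact⟩ := reach_active r hr x' hv
  exact hnact x'' (hclosed x' hx' x'' hr2) hact
end

section
/- For the deterministic mass action system with species $(A,B,C,D)$ and reactions $A+B\xrightarrow{\kappa_1} B+C$, $B+C\xrightarrow{\kappa_2} 2B$, $2B\xrightarrow{\kappa_3} B+C$, $2B\xrightarrow{\kappa_4} 2D$, $C\xrightarrow{\kappa_5} A$, $D\xrightarrow{\kappa_6} B$: a point $c\in\mathbb{R}_{\geq0}^4$ satisfies $g(c)=0$ if and only if $c_2=c_3=c_4=0$, or $c = (\kappa_3\kappa_5/(\kappa_1\kappa_2),\ s,\ (\kappa_3/\kappa_2)s,\ (2\kappa_4/\kappa_6)s^2)$ for some $s>0$. In particular species $A$ is ACR with value $\kappa_3\kappa_5/(\kappa_1\kappa_2)$. -/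
/-- Equilibria of the system A+B →(κ1) B+C, B+C →(κ2) 2B, 2B →(κ3) B+C, 2B →(κ4) 2D,
C →(κ5) A, D →(κ6) B: a nonnegative point is an equilibrium iff `c₂ = c₃ = c₄ = 0` or it lies
on the curve `(κ3κ5/(κ1κ2), s, (κ3/κ2)s, (2κ4/κ6)s²)`, `s > 0`. In particular A is ACR with
value κ3κ5/(κ1κ2). -/
theorem acr_example2 (κ1 κ2 κ3 κ4 κ5 κ6 : ℝ)
    (h1 : 0 < κ1) (h2 : 0 < κ2) (h3 : 0 < κ3) (h4 : 0 < κ4) (h5 : 0 < κ5) (h6 : 0 < κ6)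
    (c : Fin 4 → ℝ) (hc : ∀ i, 0 ≤ c i) :
    (-κ1 * c 0 * c 1 + κ5 * c 2 = 0 ∧
     κ2 * c 1 * c 2 - κ3 * (c 1)^2 - 2 * κ4 * (c 1)^2 + κ6 * c 3 = 0 ∧
     κ1 * c 0 * c 1 - κ2 * c 1 * c 2 + κ3 * (c 1)^2 - κ5 * c 2 = 0 ∧
     2 * κ4 * (c 1)^2 - κ6 * c 3 = 0) ↔
    ((c 1 = 0 ∧ c 2 = 0 ∧ c 3 = 0) ∨
      ∃ s : ℝ, 0 < s ∧
        c = ![κ3 * κ5 / (κ1 * κ2), s, (κ3 / κ2) * s, (2 * κ4 / κ6) * s^2]) := by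
  constructor
  · rintro ⟨e1, e2, e3, e4⟩
    by_cases hc1 : c 1 = 0
    · left
      rw [hc1] at e1 e4
      refine ⟨hc1, ?_, ?_⟩
      · nlinarith [e1]
      · nlinarith [e4]
    · right
      have hpos : 0 < c 1 := lt_of_le_of_ne (hc 1) (Ne.symm hc1)
      refine ⟨c 1, hpos, ?_⟩
      have hc3 : c 3 = (2 * κ4 / κ6) * (c 1)^2 := by
        field_simp
        linarith
      have hc2 : c 2 = (κ3 / κ2) * c 1 := by
        have h : c 1 * (κ2 * c 2) = c 1 * (κ3 * c 1) := by nlinarith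
        have := mul_left_cancel₀ hc1 h
        field_simp
        linarith
      have hc0 : c 0 = κ3 * κ5 / (κ1 * κ2) := by
        have h : c 1 * (κ1 * κ2 * c 0) = c 1 * (κ3 * κ5) := by
          have : κ1 * c 0 * c 1 = κ5 * c 2 := by linarith
          rw [hc2] at this
          field_simp at this
          nlinarith
        have := mul_left_cancel₀ hc1 h
        field_simp
        linarith
      funext i
      fin_cases i <;> simp [hc0, hc2, hc3]
  · rintro (⟨ha, hb, hd⟩ | ⟨s, hs, rfl⟩)
    · refine ⟨?_, ?_, ?_, ?_⟩ <;> simp [ha, hb, hd] <;> ring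
    · simp only [Matrix.cons_val_zero, Matrix.cons_val_one, Matrix.head_cons,
        Matrix.cons_val_two, Matrix.tail_cons, Matrix.cons_val_three]
      refine ⟨?_, ?_, ?_, ?_⟩ <;> field_simp <;> ring
end

section
/- For the stochastic mass action system with species $(A,B,C,D)$ and reactions $A+B\to B+C$, $B+C\to 2B$, $2B\to B+C$, $2B\to 2D$, $C\to A$, $D\to B$: every reachable step preserves $x_1+x_2+x_3+x_4$ and never decreases $x_2+x_4$ below 1 once it is at least 1 (the only reaction decreasing $x_2+x_4$ is $2B\to B+C$, which requires $x_2\geq 2$). If $X_1(0)+X_2(0)+X_3(0)+X_4(0)\geq 2$ and $X_2(0)+X_4(0)\geq 1$, then no extinction set for $A+B\to B+C$ is reachable from $X(0)$. -/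
open Finset

/-- The network A+B → B+C, B+C → 2B, 2B → B+C, 2B → 2D, C → A, D → B. -/
def N4 : List (Rxn 4) :=
  [(![1,1,0,0], ![0,1,1,0]), (![0,1,1,0], ![0,2,0,0]), (![0,2,0,0], ![0,1,1,0]),
   (![0,2,0,0], ![0,0,0,2]), (![0,0,1,0], ![1,0,0,0]), (![0,0,0,1], ![0,1,0,0])]

section Aux

lemma step_of {d : ℕ} (R : List (Rxn d)) (r : Rxn d) (hr : r ∈ R) (x : State d)
    (h : active r.1 x) : step R x (fun i => x i + r.2 i - r.1 i) := by
  refine ⟨r, hr, h, fun i => ?_⟩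
  have := h i
  show x i + r.2 i - r.1 i + r.1 i = x i + r.2 i
  omega

lemma step_mass (x x' : State 4) (h : step N4 x x') :
    x' 0 + x' 1 + x' 2 + x' 3 = x 0 + x 1 + x 2 + x 3 := by
  obtain ⟨r, hr, ha, he⟩ := h
  have e0 := he 0; have e1 := he 1; have e2 := he 2; have e3 := he 3
  simp [N4] at hr
  rcases hr with h | h | h | h | h | h <;> subst h <;>
    simp [Matrix.cons_val_zero, Matrix.cons_val_one, Fin.isValue] at e0 e1 e2 e3 <;> omega

lemma step_bd (x x' : State 4) (h : step N4 x x') (hb : 1 ≤ x 1 + x 3) :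
    1 ≤ x' 1 + x' 3 := by
  obtain ⟨r, hr, ha, he⟩ := h
  have e1 := he 1; have e3 := he 3
  simp [N4] at hr
  rcases hr with h | h | h | h | h | h <;> subst h <;>
    first
    | (have a1 := ha 1;
       simp [Matrix.cons_val_zero, Matrix.cons_val_one, Fin.isValue] at e1 e3 a1 ⊢; omega)
    | (simp [Matrix.cons_val_zero, Matrix.cons_val_one, Fin.isValue] at e1 e3; omega)

lemma reach_active_s11 : ∀ n (x : State 4), x 3 = n →
    2 ≤ x 0 + x 1 + x 2 + x 3 → 1 ≤ x 1 + x 3 →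
    ∃ x', reach N4 x x' ∧ active ![1,1,0,0] x' := by
  intro n
  induction n with
  | zero =>
    intro x h3 hm hb
    by_cases h0 : 1 ≤ x 0
    · refine ⟨x, Relation.ReflTransGen.refl, fun i => ?_⟩
      fin_cases i <;> simp_all <;> omega
    · by_cases h2 : 1 ≤ x 2
      · -- apply C → A
        have hs := step_of N4 (![0,0,1,0], ![1,0,0,0]) (by simp [N4]) x
          (by intro i; fin_cases i <;> simp <;> omega)
        refine ⟨_, Relation.ReflTransGen.single hs, fun i => ?_⟩
        fin_cases i <;> simp <;> omega
      · -- x 2 = 0, x 0 = 0, x 3 = 0 so x 1 ≥ 2 : apply 2B → B+C then C → A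
        have hx1 : 2 ≤ x 1 := by omega
        have hs := step_of N4 (![0,2,0,0], ![0,1,1,0]) (by simp [N4]) x
          (by intro i; fin_cases i <;> simp <;> omega)
        set y : State 4 := fun i => x i + (![0,1,1,0] : State 4) i - (![0,2,0,0] : State 4) i with hy
        have hy0 : y 0 = x 0 := by simp [hy]
        have hy1 : y 1 = x 1 - 1 := by simp [hy] <;> omega
        have hy2 : y 2 = x 2 + 1 := by simp [hy]
        have hs2 := step_of N4 (![0,0,1,0], ![1,0,0,0]) (by simp [N4]) y
          (by intro i; fin_cases i <;> simp [hy0, hy1, hy2] <;> omega)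
        refine ⟨_, Relation.ReflTransGen.head hs (Relation.ReflTransGen.single hs2),
          fun i => ?_⟩
        fin_cases i <;> simp [hy0, hy1, hy2] <;> omega
  | succ n ih =>
    intro x h3 hm hb
    -- apply D → B
    have hs := step_of N4 (![0,0,0,1], ![0,1,0,0]) (by simp [N4]) x
      (by intro i; fin_cases i <;> simp <;> omega)
    set y : State 4 := fun i => x i + (![0,1,0,0] : State 4) i - (![0,0,0,1] : State 4) i with hy
    have hy0 : y 0 = x 0 := by simp [hy]
    have hy1 : y 1 = x 1 + 1 := by simp [hy]
    have hy2 : y 2 = x 2 := by simp [hy]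
    have hy3 : y 3 = x 3 - 1 := by simp [hy]
    obtain ⟨x', hr, ha⟩ := ih y (by omega) (by omega) (by omega)
    exact ⟨x', Relation.ReflTransGen.head hs hr, ha⟩

lemma reach_inv (x x' : State 4) (h : reach N4 x x')
    (hm : 2 ≤ x 0 + x 1 + x 2 + x 3) (hb : 1 ≤ x 1 + x 3) :
    2 ≤ x' 0 + x' 1 + x' 2 + x' 3 ∧ 1 ≤ x' 1 + x' 3 := by
  induction h with
  | refl => exact ⟨hm, hb⟩
  | tail hs h ih => exact ⟨(step_mass _ _ h) ▸ ih.1, step_bd _ _ h ih.2⟩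

end Aux

/-- Every step preserves the total mass and preserves `x₂ + x₄ ≥ 1`; if the total mass is at
least 2 and `x₂ + x₄ ≥ 1` initially, then no extinction set for A+B → B+C is reachable. -/
theorem no_ext_AB_N4 (x0 : State 4)
    (hm : 2 ≤ x0 0 + x0 1 + x0 2 + x0 3) (hb : 1 ≤ x0 1 + x0 3) :
    (∀ x x' : State 4, step N4 x x' →
      x' 0 + x' 1 + x' 2 + x' 3 = x 0 + x 1 + x 2 + x 3) ∧
    (∀ x x' : State 4, step N4 x x' → 1 ≤ x 1 + x 3 → 1 ≤ x' 1 + x' 3) ∧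
    noExtSetReachable N4 (![1,1,0,0], ![0,1,1,0]) x0 := by
  refine ⟨step_mass, step_bd, ?_⟩
  rintro Γ ⟨hcl, hna⟩ x' hx' hrx
  obtain ⟨hm', hb'⟩ := reach_inv x0 x' hrx hm hb
  obtain ⟨x'', hr'', ha''⟩ := reach_active_s11 (x' 3) x' rfl hm' hb'
  exact hna x'' (hcl x' hx' x'' hr'') ha''
end

section
/- For the deterministic mass action system with species $(A,B,C)$ and reactions $A+B\xrightarrow{\kappa_1} B+C$, $B+C\xrightarrow{\kappa_2} 2B$, $2B\xrightarrow{\kappa_3} B+C$, $C\xrightarrow{\kappa_4} A$: a point $c\in\mathbb{R}_{\geq0}^3$ satisfies $g(c)=0$ if and only if $c_2=c_3=0$, or $c = (\kappa_3\kappa_4/(\kappa_1\kappa_2),\ s,\ (\kappa_3/\kappa_2)s)$ for some $s>0$. In particular species $A$ is ACR with value $\kappa_3\kappa_4/(\kappa_1\kappa_2)$. -/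
/-- Equilibria of the system A+B →(κ1) B+C, B+C →(κ2) 2B, 2B →(κ3) B+C, C →(κ4) A:
a nonnegative point is an equilibrium iff `c₂ = c₃ = 0` or it equals
`(κ3κ4/(κ1κ2), s, (κ3/κ2)s)` for some `s > 0`. In particular A is ACR with
value κ3κ4/(κ1κ2). -/
theorem acr_example3 (κ1 κ2 κ3 κ4 : ℝ)
    (h1 : 0 < κ1) (h2 : 0 < κ2) (h3 : 0 < κ3) (h4 : 0 < κ4)
    (c : Fin 3 → ℝ) (hc : ∀ i, 0 ≤ c i) :
    (-κ1 * c 0 * c 1 + κ4 * c 2 = 0 ∧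
     κ2 * c 1 * c 2 - κ3 * (c 1)^2 = 0 ∧
     κ1 * c 0 * c 1 - κ2 * c 1 * c 2 + κ3 * (c 1)^2 - κ4 * c 2 = 0) ↔
    ((c 1 = 0 ∧ c 2 = 0) ∨
      ∃ s : ℝ, 0 < s ∧ c = ![κ3 * κ4 / (κ1 * κ2), s, (κ3 / κ2) * s]) := by
  constructor
  · rintro ⟨e1, e2, e3⟩
    rcases eq_or_lt_of_le (hc 1) with hb | hb
    · left
      refine ⟨hb.symm, ?_⟩
      have h : κ4 * c 2 = 0 := by rw [← hb] at e1; linarith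
      exact (mul_eq_zero.mp h).resolve_left h4.ne'
    · right
      refine ⟨c 1, hb, ?_⟩
      have hκ : κ2 * c 2 = κ3 * c 1 := by
        have key2 : c 1 * (κ2 * c 2 - κ3 * c 1) = 0 := by linear_combination e2
        rcases mul_eq_zero.mp key2 with h | h
        · exact absurd h hb.ne'
        · linarith
      have hC : c 2 = (κ3 / κ2) * c 1 := by
        field_simp
        linear_combination hκ
      have hA : c 0 = κ3 * κ4 / (κ1 * κ2) := by
        have key : (κ1 * c 0 * κ2 - κ3 * κ4) * c 1 = 0 := by
          linear_combination -κ2 * e1 + κ4 * hκ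
        have hmul : κ1 * c 0 * κ2 - κ3 * κ4 = 0 :=
          (mul_eq_zero.mp key).resolve_right hb.ne'
        field_simp
        linear_combination hmul
      funext i
      fin_cases i <;> simp [hA, hC]
  · rintro (⟨hb, hcc⟩ | ⟨s, hs, rfl⟩)
    · refine ⟨by rw [hb, hcc]; ring, by rw [hb]; ring, by rw [hb, hcc]; ring⟩
    · simp only [Matrix.cons_val_zero, Matrix.cons_val_one, Matrix.head_cons,
        Matrix.cons_val_two, Matrix.tail_cons]
      refine ⟨?_, ?_, ?_⟩ <;> field_simp <;> ring
end

section
/- For the deterministic mass action system with species $(A,B,C,D,E)$ and reactions $A+B\xrightarrow{\kappa_1} B+C$, $B+C\xrightarrow{\kappa_2} 2B$, $2B\xrightarrow{\kappa_3} B+C$, $C\xrightarrow{\kappa_4} A$, $E\xrightarrow{\kappa_5} A$, $A+D\xrightarrow{\kappa_6} D+E$, $D+E\xrightarrow{\kappa_7} 2D$, $2D\xrightarrow{\kappa_8} D+E$: there exists $c\in\mathbb{R}_{>0}^5$ with $g(c)=0$ if and only if $\kappa_3\kappa_4/(\kappa_1\kappa_2) = \kappa_5\kappa_8/(\kappa_6\kappa_7)$.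 In particular, for rate constants not satisfying this equality the system has no positive equilibrium. -/
/-- For the system A+B →(κ1) B+C, B+C →(κ2) 2B, 2B →(κ3) B+C, C →(κ4) A, E →(κ5) A,
A+D →(κ6) D+E, D+E →(κ7) 2D, 2D →(κ8) D+E: a positive equilibrium exists iff
`κ3κ4/(κ1κ2) = κ5κ8/(κ6κ7)`. -/
theorem pos_equilibrium_iff (κ1 κ2 κ3 κ4 κ5 κ6 κ7 κ8 : ℝ)
    (h1 : 0 < κ1) (h2 : 0 < κ2) (h3 : 0 < κ3) (h4 : 0 < κ4)
    (h5 : 0 < κ5) (h6 : 0 < κ6) (h7 : 0 < κ7) (h8 : 0 < κ8) :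
    (∃ c : Fin 5 → ℝ, (∀ i, 0 < c i) ∧
      -κ1 * c 0 * c 1 + κ4 * c 2 + κ5 * c 4 - κ6 * c 0 * c 3 = 0 ∧
      κ2 * c 1 * c 2 - κ3 * (c 1)^2 = 0 ∧
      κ1 * c 0 * c 1 - κ2 * c 1 * c 2 + κ3 * (c 1)^2 - κ4 * c 2 = 0 ∧
      κ7 * c 3 * c 4 - κ8 * (c 3)^2 = 0 ∧
      -κ5 * c 4 + κ6 * c 0 * c 3 - κ7 * c 3 * c 4 + κ8 * (c 3)^2 = 0) ↔
    κ3 * κ4 / (κ1 * κ2) = κ5 * κ8 / (κ6 * κ7) := by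
  constructor
  · rintro ⟨c, hpos, E1, E2, E3, E4, E5⟩
    have hc1 := (hpos 1).ne'
    have hc3 := (hpos 3).ne'
    have A : κ2 * c 2 = κ3 * c 1 := by
      refine mul_left_cancel₀ hc1 ?_
      nlinarith [E2]
    have B : κ1 * κ2 * c 0 = κ3 * κ4 := by
      refine mul_left_cancel₀ hc1 ?_
      nlinarith [E3, A]
    have C : κ7 * c 4 = κ8 * c 3 := by
      refine mul_left_cancel₀ hc3 ?_
      nlinarith [E4]
    have D : κ6 * κ7 * c 0 = κ5 * κ8 := by
      refine mul_left_cancel₀ hc3 ?_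
      nlinarith [E5, C]
    rw [div_eq_div_iff (by positivity) (by positivity)]
    linear_combination (κ1 * κ2) * D - (κ6 * κ7) * B
  · intro h
    rw [div_eq_div_iff (by positivity) (by positivity)] at h
    refine ⟨![κ3 * κ4 / (κ1 * κ2), 1, κ3 / κ2, 1, κ8 / κ7], ?_, ?_, ?_, ?_, ?_, ?_⟩
    · intro i
      fin_cases i <;> simp <;> positivity
    · show -κ1 * (κ3 * κ4 / (κ1 * κ2)) * 1 + κ4 * (κ3 / κ2) + κ5 * (κ8 / κ7)
          - κ6 * (κ3 * κ4 / (κ1 * κ2)) * 1 = 0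
      field_simp
      linear_combination (-1) * h
    · show κ2 * 1 * (κ3 / κ2) - κ3 * 1 ^ 2 = 0
      field_simp
      ring
    · show κ1 * (κ3 * κ4 / (κ1 * κ2)) * 1 - κ2 * 1 * (κ3 / κ2) + κ3 * 1 ^ 2
          - κ4 * (κ3 / κ2) = 0
      field_simp
      ring
    · show κ7 * 1 * (κ8 / κ7) - κ8 * 1 ^ 2 = 0
      field_simp
      ring
    · show -κ5 * (κ8 / κ7) + κ6 * (κ3 * κ4 / (κ1 * κ2)) * 1 - κ7 * 1 * (κ8 / κ7)
          + κ8 * 1 ^ 2 = 0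
      field_simp
      linear_combination h
end

section
/- For the reaction network with species $(A,B,C,D,E)$ and reactions $A+B\to B+C$, $B+C\to 2B$, $2B\to B+C$, $C\to A$, $E\to A$, $A+D\to D+E$, $D+E\to 2D$, $2D\to D+E$, under discrete reachability: for every $m\geq 2$, the set $\Upsilon_m = \{x\in\mathbb{Z}_{\geq0}^5 : x_2\geq 1,\ x_4\geq 1,\ \|x\|_1 = m\}$ is closed (no state outside $\Upsilon_m$ is reachable from $\Upsilon_m$) and irreducible (any two states of $\Upsilon_m$ are mutually reachable). -/
open Finset

/-- The network A+B → B+C, B+C → 2B, 2B → B+C, C → A, E → A, A+D → D+E, D+E → 2D, 2D → D+E. -/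
def N5 : List (Rxn 5) :=
  [(![1,1,0,0,0], ![0,1,1,0,0]), (![0,1,1,0,0], ![0,2,0,0,0]), (![0,2,0,0,0], ![0,1,1,0,0]),
   (![0,0,1,0,0], ![1,0,0,0,0]), (![0,0,0,0,1], ![1,0,0,0,0]),
   (![1,0,0,1,0], ![0,0,0,1,1]), (![0,0,0,1,1], ![0,0,0,2,0]), (![0,0,0,2,0], ![0,0,0,1,1])]

/-- The set `Υ_m` of states of mass `m` with at least one B and one D molecule. -/
def Υ (m : ℕ) : Set (State 5) := {x | 1 ≤ x 1 ∧ 1 ≤ x 3 ∧ ∑ i, x i = m}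
section Aux
open Relation

private lemma s1 (a b c d e : ℕ) : step N5 ![a+1,b+1,c,d,e] ![a,b+1,c+1,d,e] := by
  refine ⟨(![1,1,0,0,0], ![0,1,1,0,0]), by simp [N5], ?_, ?_⟩ <;>
    intro i <;> fin_cases i <;> simp
private lemma s2 (a b c d e : ℕ) : step N5 ![a,b+1,c+1,d,e] ![a,b+2,c,d,e] := by
  refine ⟨(![0,1,1,0,0], ![0,2,0,0,0]), by simp [N5], ?_, ?_⟩ <;>
    intro i <;> fin_cases i <;> simp <;> omega
private lemma s3 (a b c d e : ℕ) : step N5 ![a,b+2,c,d,e] ![a,b+1,c+1,d,e] := by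
  refine ⟨(![0,2,0,0,0], ![0,1,1,0,0]), by simp [N5], ?_, ?_⟩ <;>
    intro i <;> fin_cases i <;> simp <;> omega
private lemma s4 (a b c d e : ℕ) : step N5 ![a,b,c+1,d,e] ![a+1,b,c,d,e] := by
  refine ⟨(![0,0,1,0,0], ![1,0,0,0,0]), by simp [N5], ?_, ?_⟩ <;>
    intro i <;> fin_cases i <;> simp <;> omega
private lemma s5 (a b c d e : ℕ) : step N5 ![a,b,c,d,e+1] ![a+1,b,c,d,e] := by
  refine ⟨(![0,0,0,0,1], ![1,0,0,0,0]), by simp [N5], ?_, ?_⟩ <;>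
    intro i <;> fin_cases i <;> simp <;> omega
private lemma s6 (a b c d e : ℕ) : step N5 ![a+1,b,c,d+1,e] ![a,b,c,d+1,e+1] := by
  refine ⟨(![1,0,0,1,0], ![0,0,0,1,1]), by simp [N5], ?_, ?_⟩ <;>
    intro i <;> fin_cases i <;> simp <;> omega
private lemma s7 (a b c d e : ℕ) : step N5 ![a,b,c,d+1,e+1] ![a,b,c,d+2,e] := by
  refine ⟨(![0,0,0,1,1], ![0,0,0,2,0]), by simp [N5], ?_, ?_⟩ <;>
    intro i <;> fin_cases i <;> simp <;> omega
private lemma s8 (a b c d e : ℕ) : step N5 ![a,b,c,d+2,e] ![a,b,c,d+1,e+1] := by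
  refine ⟨(![0,0,0,2,0], ![0,0,0,1,1]), by simp [N5], ?_, ?_⟩ <;>
    intro i <;> fin_cases i <;> simp <;> omega

private lemma clearC (a b d e : ℕ) : ∀ c, reach N5 ![a,b,c,d,e] ![a+c,b,0,d,e] := by
  intro c
  induction c generalizing a with
  | zero => exact ReflTransGen.refl
  | succ c ih =>
      have h : a + (c+1) = (a+1) + c := by omega
      rw [h]
      exact ReflTransGen.head (s4 a b c d e) (ih (a+1))
private lemma clearE (a b c d : ℕ) : ∀ e, reach N5 ![a,b,c,d,e] ![a+e,b,c,d,0] := by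
  intro e
  induction e generalizing a with
  | zero => exact ReflTransGen.refl
  | succ e ih =>
      have h : a + (e+1) = (a+1) + e := by omega
      rw [h]
      exact ReflTransGen.head (s5 a b c d e) (ih (a+1))
private lemma reduceB (a c d e : ℕ) : ∀ b, reach N5 ![a,b+1,c,d,e] ![a+b,1,c,d,e] := by
  intro b
  induction b generalizing a with
  | zero => exact ReflTransGen.refl
  | succ b ih =>
      have h : a + (b+1) = (a+1) + b := by omega
      rw [h]
      exact ReflTransGen.head (s3 a b c d e) (ReflTransGen.head (s4 a (b+1) c d e) (ih (a+1)))
private lemma reduceD (a b c e : ℕ) : ∀ d, reach N5 ![a,b,c,d+1,e] ![a+d,b,c,1,e] := by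
  intro d
  induction d generalizing a with
  | zero => exact ReflTransGen.refl
  | succ d ih =>
      have h : a + (d+1) = (a+1) + d := by omega
      rw [h]
      exact ReflTransGen.head (s8 a b c d e) (ReflTransGen.head (s5 a b c (d+1) e) (ih (a+1)))

private lemma makeC (a b d e : ℕ) : ∀ k c, reach N5 ![a+k,b+1,c,d,e] ![a,b+1,c+k,d,e] := by
  intro k
  induction k generalizing a with
  | zero => intro c; exact ReflTransGen.refl
  | succ k ih =>
      intro c
      have h1 : a + (k+1) = (a+k) + 1 := by omega
      have h2 : c + (k+1) = (c+1) + k := by omega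
      rw [h1, h2]
      exact ReflTransGen.head (s1 (a+k) b c d e) (ih a (c+1))
private lemma makeB (a c d e : ℕ) : ∀ k b, reach N5 ![a+k,b+1,c,d,e] ![a,b+1+k,c,d,e] := by
  intro k
  induction k generalizing a with
  | zero => intro b; exact ReflTransGen.refl
  | succ k ih =>
      intro b
      have h1 : a + (k+1) = (a+k) + 1 := by omega
      have h2 : b + 1 + (k+1) = (b+1) + 1 + k := by omega
      rw [h1, h2]
      exact ReflTransGen.head (s1 (a+k) b c d e)
        (ReflTransGen.head (s2 (a+k) b c d e) (ih a (b+1)))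
private lemma makeE (a b c d : ℕ) : ∀ k e, reach N5 ![a+k,b,c,d+1,e] ![a,b,c,d+1,e+k] := by
  intro k
  induction k generalizing a with
  | zero => intro e; exact ReflTransGen.refl
  | succ k ih =>
      intro e
      have h1 : a + (k+1) = (a+k) + 1 := by omega
      have h2 : e + (k+1) = (e+1) + k := by omega
      rw [h1, h2]
      exact ReflTransGen.head (s6 (a+k) b c d e) (ih a (e+1))
private lemma makeD (a b c e : ℕ) : ∀ k d, reach N5 ![a+k,b,c,d+1,e] ![a,b,c,d+1+k,e] := by
  intro k
  induction k generalizing a with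
  | zero => intro d; exact ReflTransGen.refl
  | succ k ih =>
      intro d
      have h1 : a + (k+1) = (a+k) + 1 := by omega
      have h2 : d + 1 + (k+1) = (d+1) + 1 + k := by omega
      rw [h1, h2]
      exact ReflTransGen.head (s6 (a+k) b c d e)
        (ReflTransGen.head (s7 (a+k) b c d e) (ih a (d+1)))

private lemma toCanonical (a b c d e : ℕ) :
    reach N5 ![a,b+1,c,d+1,e] ![a+b+c+d+e,1,0,1,0] := by
  have h1 := clearC a (b+1) (d+1) e c
  have h2 := clearE (a+c) (b+1) 0 (d+1) e
  have h3 := reduceB (a+c+e) 0 (d+1) 0 b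
  have h4 := reduceD (a+c+e+b) 1 0 0 d
  have : a+c+e+b+d = a+b+c+d+e := by omega
  rw [this] at h4
  exact ((h1.trans h2).trans h3).trans h4

private lemma reach_congr {x y x' y' : State 5} (hx : x = x') (hy : y = y')
    (h : reach N5 x y) : reach N5 x' y' := by subst hx; subst hy; exact h

private lemma fromCanonical (a b c d e : ℕ) :
    reach N5 ![a+b+c+d+e,1,0,1,0] ![a,b+1,c,d+1,e] := by
  have h1 : reach N5 ![a+b+c+d+e,1,0,1,0] ![a+b+c+e,1,0,d+1,0] :=
    reach_congr (by funext i; fin_cases i <;> simp <;> omega)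
      (by funext i; fin_cases i <;> simp <;> omega) (makeD (a+b+c+e) 1 0 0 d 0)
  have h2 : reach N5 ![a+b+c+e,1,0,d+1,0] ![a+b+c,1,0,d+1,e] :=
    reach_congr (by funext i; fin_cases i <;> simp <;> omega)
      (by funext i; fin_cases i <;> simp <;> omega) (makeE (a+b+c) 1 0 d e 0)
  have h3 : reach N5 ![a+b+c,1,0,d+1,e] ![a+c,b+1,0,d+1,e] :=
    reach_congr (by funext i; fin_cases i <;> simp <;> omega)
      (by funext i; fin_cases i <;> simp <;> omega) (makeB (a+c) 0 (d+1) e b 0)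
  have h4 : reach N5 ![a+c,b+1,0,d+1,e] ![a,b+1,c,d+1,e] :=
    reach_congr (by funext i; fin_cases i <;> simp <;> omega)
      (by funext i; fin_cases i <;> simp <;> omega) (makeC a b (d+1) e c 0)
  exact ((h1.trans h2).trans h3).trans h4

private lemma step_preserve (m : ℕ) (x x' : State 5) (h : step N5 x x') (hx : x ∈ Υ m) :
    x' ∈ Υ m := by
  obtain ⟨h1, h3, hs⟩ := hx
  obtain ⟨r, hr, hact, heq⟩ := h
  have a0 := hact 0; have a1 := hact 1; have a2 := hact 2
  have a3 := hact 3; have a4 := hact 4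
  have e0 := heq 0; have e1 := heq 1; have e2 := heq 2
  have e3 := heq 3; have e4 := heq 4
  rw [Fin.sum_univ_five] at hs
  refine ⟨?_, ?_, ?_⟩
  all_goals (
    try rw [Fin.sum_univ_five]
    simp [N5] at hr
    rcases hr with rfl|rfl|rfl|rfl|rfl|rfl|rfl|rfl <;>
      simp at a0 a1 a2 a3 a4 e0 e1 e2 e3 e4 <;> omega)
end Aux

/-- For every `m ≥ 2`, the set `Υ_m` is closed and irreducible. -/
theorem closed_irreducible_Υ : ∀ m : ℕ, 2 ≤ m →
    (∀ x ∈ Υ m, ∀ x', reach N5 x x' → x' ∈ Υ m) ∧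
    (∀ x ∈ Υ m, ∀ x' ∈ Υ m, reach N5 x x') := by
  intro m hm
  constructor
  · intro x hx x' hr
    induction hr with
    | refl => exact hx
    | tail _ h ih => exact step_preserve m _ _ h ih
  · intro x hx y hy
    obtain ⟨hx1, hx3, hxs⟩ := hx
    obtain ⟨hy1, hy3, hys⟩ := hy
    rw [Fin.sum_univ_five] at hxs hys
    have ex : x = ![x 0, (x 1 - 1)+1, x 2, (x 3 - 1)+1, x 4] := by
      funext i; fin_cases i <;> simp <;> omega
    have ey : y = ![y 0, (y 1 - 1)+1, y 2, (y 3 - 1)+1, y 4] := by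
      funext i; fin_cases i <;> simp <;> omega
    have h1 : reach N5 x ![m-2,1,0,1,0] := by
      rw [ex]
      have := toCanonical (x 0) (x 1 - 1) (x 2) (x 3 - 1) (x 4)
      have heq : x 0 + (x 1 - 1) + x 2 + (x 3 - 1) + x 4 = m - 2 := by omega
      rwa [heq] at this
    have h2 : reach N5 ![m-2,1,0,1,0] y := by
      rw [ey]
      have := fromCanonical (y 0) (y 1 - 1) (y 2) (y 3 - 1) (y 4)
      have heq : y 0 + (y 1 - 1) + y 2 + (y 3 - 1) + y 4 = m - 2 := by omega
      rwa [heq] at this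
    exact h1.trans h2
end

section
/- For the deterministic mass action system with species $(A,B,C,D,E)$ and reactions $A+B\xrightarrow{\kappa_1} C+E$, $C+E\xrightarrow{\kappa_2} B+D$, $B+D\xrightarrow{\kappa_3} C+E$, $C\xrightarrow{\kappa_4} A$, $B\xrightarrow{\kappa_5} D$, $D\xrightarrow{\kappa_6} E$, $E\xrightarrow{\kappa_7} B$: every positive equilibrium $c\in\mathbb{R}_{>0}^5$ has first coordinate $c_1 = u$, where $u$ is the unique positive root of $\kappa_1^2\kappa_2\kappa_6 u^2 + \kappa_1\kappa_2\kappa_5\kappa_6 u - \kappa_3\kappa_4\kappa_5\kappa_7 = 0$, namely $u = \big(-\kappa_2\kappa_5\kappa_6 + \sqrt{\kappa_2^2\kappa_5^2\kappa_6^2 + 4\kappa_2\kappa_3\kappa_4\kappa_5\kappa_6\kappa_7}\big)/(2\kappa_1\kappa_2\kappa_6)$; hence species $A$ is ACR. -/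
/-- For the system A+B →(κ1) C+E, C+E →(κ2) B+D, B+D →(κ3) C+E, C →(κ4) A, B →(κ5) D,
D →(κ6) E, E →(κ7) B: the number `u` given by the quadratic formula is the unique positive
root of `κ1²κ2κ6 u² + κ1κ2κ5κ6 u - κ3κ4κ5κ7 = 0`, and every positive equilibrium has first
coordinate `u`; hence species A is ACR. -/
theorem acr_example4 (κ1 κ2 κ3 κ4 κ5 κ6 κ7 : ℝ)
    (h1 : 0 < κ1) (h2 : 0 < κ2) (h3 : 0 < κ3) (h4 : 0 < κ4)
    (h5 : 0 < κ5) (h6 : 0 < κ6) (h7 : 0 < κ7) :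
    let u := (-(κ2 * κ5 * κ6) +
      Real.sqrt (κ2^2 * κ5^2 * κ6^2 + 4 * κ2 * κ3 * κ4 * κ5 * κ6 * κ7)) / (2 * κ1 * κ2 * κ6)
    (0 < u ∧ κ1^2 * κ2 * κ6 * u^2 + κ1 * κ2 * κ5 * κ6 * u - κ3 * κ4 * κ5 * κ7 = 0 ∧
      (∀ v : ℝ, 0 < v →
        κ1^2 * κ2 * κ6 * v^2 + κ1 * κ2 * κ5 * κ6 * v - κ3 * κ4 * κ5 * κ7 = 0 → v = u)) ∧
    ∀ c : Fin 5 → ℝ, (∀ i, 0 < c i) →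
      (-κ1 * c 0 * c 1 + κ4 * c 2 = 0 ∧
       -κ1 * c 0 * c 1 + κ2 * c 2 * c 4 - κ3 * c 1 * c 3 - κ5 * c 1 + κ7 * c 4 = 0 ∧
       κ1 * c 0 * c 1 - κ2 * c 2 * c 4 + κ3 * c 1 * c 3 - κ4 * c 2 = 0 ∧
       κ2 * c 2 * c 4 - κ3 * c 1 * c 3 + κ5 * c 1 - κ6 * c 3 = 0 ∧
       κ1 * c 0 * c 1 - κ2 * c 2 * c 4 + κ3 * c 1 * c 3 + κ6 * c 3 - κ7 * c 4 = 0) →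
      c 0 = u := by
  intro u
  have hDnn : (0:ℝ) ≤ κ2^2 * κ5^2 * κ6^2 + 4 * κ2 * κ3 * κ4 * κ5 * κ6 * κ7 := by positivity
  set s := Real.sqrt (κ2^2 * κ5^2 * κ6^2 + 4 * κ2 * κ3 * κ4 * κ5 * κ6 * κ7) with hs
  have hs2 : s^2 = κ2^2 * κ5^2 * κ6^2 + 4 * κ2 * κ3 * κ4 * κ5 * κ6 * κ7 :=
    Real.sq_sqrt hDnn
  have hsgt : κ2 * κ5 * κ6 < s := by
    rw [hs]
    rw [show κ2 * κ5 * κ6 = Real.sqrt ((κ2*κ5*κ6)^2) by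
      rw [Real.sqrt_sq (by positivity)]]
    apply Real.sqrt_lt_sqrt (by positivity)
    nlinarith [mul_pos (mul_pos (mul_pos (mul_pos (mul_pos h2 h3) h4) h5) h6) h7]
  have hden : (0:ℝ) < 2 * κ1 * κ2 * κ6 := by positivity
  have hu : u = (-(κ2 * κ5 * κ6) + s) / (2 * κ1 * κ2 * κ6) := rfl
  have hupos : 0 < u := by
    rw [hu]; apply div_pos (by linarith) hden
  have hmu : 2 * κ1 * κ2 * κ6 * u = -(κ2 * κ5 * κ6) + s := by
    rw [hu]; field_simp
  have hz : 4 * κ2 * κ6 *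
      (κ1^2 * κ2 * κ6 * u^2 + κ1 * κ2 * κ5 * κ6 * u - κ3 * κ4 * κ5 * κ7) = 0 := by
    linear_combination (2 * κ1 * κ2 * κ6 * u + κ2 * κ5 * κ6 + s) * hmu + hs2
  have huroot : κ1^2 * κ2 * κ6 * u^2 + κ1 * κ2 * κ5 * κ6 * u - κ3 * κ4 * κ5 * κ7 = 0 := by
    have h46 : (4 : ℝ) * κ2 * κ6 ≠ 0 := by positivity
    exact (mul_eq_zero.mp hz).resolve_left h46
  have huniq : ∀ v : ℝ, 0 < v →
      κ1^2 * κ2 * κ6 * v^2 + κ1 * κ2 * κ5 * κ6 * v - κ3 * κ4 * κ5 * κ7 = 0 → v = u := by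
    intro v hv hveq
    have hfac : (v - u) * (κ1^2 * κ2 * κ6 * (v + u) + κ1 * κ2 * κ5 * κ6) = 0 := by
      linear_combination hveq - huroot
    have hpos : 0 < κ1^2 * κ2 * κ6 * (v + u) + κ1 * κ2 * κ5 * κ6 := by positivity
    have := mul_eq_zero.mp hfac
    rcases this with h | h
    · linarith
    · linarith
  refine ⟨⟨hupos, huroot, huniq⟩, ?_⟩
  intro c hc ⟨e1, e2, e3, e4, e5⟩
  have hc1 := hc 1
  have key : κ2 * c 2 * c 4 - κ3 * c 1 * c 3 = 0 := by linear_combination -e1 - e3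
  have h2' : κ4 * c 2 - κ1 * c 0 * c 1 = 0 := by linear_combination e1
  have h3' : κ6 * c 3 - κ5 * c 1 = 0 := by linear_combination key - e4
  have h4' : κ7 * c 4 - κ1 * c 0 * c 1 - κ6 * c 3 = 0 := by linear_combination -e5 - key
  have hq : (κ1^2 * κ2 * κ6 * (c 0)^2 + κ1 * κ2 * κ5 * κ6 * (c 0) - κ3 * κ4 * κ5 * κ7)
      * (c 1)^2 = 0 := by
    linear_combination (κ4*κ6*κ7) * key - (κ2*κ6*κ7*(c 4)) * h2'
      - (κ1*κ2*κ6*(c 0)*(c 1)) * h4'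
      + (κ3*κ4*κ7*(c 1) - κ1*κ2*κ6*(c 0)*(c 1)) * h3'
  have hc1ne : (c 1)^2 ≠ 0 := pow_ne_zero _ (ne_of_gt hc1)
  have hq0 : κ1^2 * κ2 * κ6 * (c 0)^2 + κ1 * κ2 * κ5 * κ6 * (c 0) - κ3 * κ4 * κ5 * κ7 = 0 :=
    (mul_eq_zero.mp hq).resolve_right hc1ne
  exact huniq (c 0) (hc 0) hq0
end
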